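/- (Verification of solution (4.2.2).) Let a, b, d ∈ ℝ with b − 2d ≠ 0, let λ > 0, σ ≠ 0, and m ∈ (0,1]. Define j0 = (a² − σ²(b−2d)·(b − 2d(1 + 2aλ²(2m²−1)))) / (σ²(b−2d)²), j2 = −12adλ²m²/(b−2d), j4 = 0, k0 = (a + σ²(b−2d)·(1 − 4dλ²(2m²−1))) / (σ(b−2d)), k2 = 12dλ²m²σ. Then λ, m, σ, j0, j2, j4, k0, k2 satisfy all five equations of the reduced coefficient system (coeffs 2 red). -/

import Mathlib

/-- verification that the explicit parameters of solution (4.2.2)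
satisfy all five equations of the reduced coefficient system (coeffs 2 red). -/
theorem abcd_solution_4_2_2_verification
    (a b d lam m σ : ℝ)
    (hbd : b - 2*d ≠ 0) (hlam : 0 < lam) (hσ : σ ≠ 0) (hm : m ∈ Set.Ioc (0 : ℝ) 1)
    (j0 j2 j4 k0 k2 : ℝ)
    (hj0 : j0 = (a^2 - σ^2*(b - 2*d)*(b - 2*d*(1 + 2*a*lam^2*(2*m^2 - 1))))
        / (σ^2*(b - 2*d)^2))
    (hj2 : j2 = -12*a*d*lam^2*m^2/(b - 2*d))
    (hj4 : j4 = 0)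
    (hk0 : k0 = (a + σ^2*(b - 2*d)*(1 - 4*d*lam^2*(2*m^2 - 1))) / (σ*(b - 2*d)))
    (hk2 : k2 = 12*d*lam^2*m^2*σ) :
    (-6*j4*(20*b*lam^2*m^2*σ - k2) = 0) ∧
    (-24*b*lam^2*m^2*σ*j2 + 128*b*lam^2*m^2*σ*j4 - 24*a*lam^2*m^2*k2
      - 64*b*lam^2*σ*j4 - 4*σ*j4 + 4*j2*k2 + 4*j4*k0 = 0) ∧
    (16*b*lam^2*m^2*σ*j2 - 24*b*lam^2*m^2*σ*j4 + 16*a*lam^2*m^2*k2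
      - 8*b*lam^2*σ*j2 + 24*b*lam^2*σ*j4 - 8*a*lam^2*k2 - 2*σ*j2 + 2*j0*k2
      + 2*j2*k0 + 2*k2 = 0) ∧
    (-24*d*lam^2*m^2*σ*k2 + 2*k2^2 + 4*j4 = 0) ∧
    (16*d*lam^2*m^2*σ*k2 - 8*d*lam^2*σ*k2 - 2*σ*k2 + 2*k0*k2 + 2*j2 = 0) := by
  subst hj0 hj2 hj4 hk0 hk2
  have hbd' : b - d * 2 ≠ 0 := by rwa [mul_comm] at hbd
  refine ⟨by ring, by field_simp; ring, by field_simp; ring, by field_simp; ring, by field_simp; ring⟩
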